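/- The inequality 12Λ(π/6) + 60Λ(π/10) − 54Λ(π/9) < 30Λ(π/3) holds. (Equivalently, the constant a = 4·v_tet + 12Λ(π/6) + 60Λ(π/10) − 54Λ(π/9) appearing in Adams's bound when g₅ ≥ 1 is strictly less than 14·v_tet, so for a reduced alternating diagram with more than eight twists, each of length at least five, the bound 10·v_tet·(t − 1.4) improves 10·v_tet·t − a.) -/

import Mathlib

open Real MeasureTheory

/-- The Lobachevsky function `Λ(θ) = −∫₀^θ log |2 sin t| dt`. -/
noncomputable def lob (θ : ℝ) : ℝ := - ∫ t in (0:ℝ)..θ, Real.log |2 * Real.sin t|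

open Set intervalIntegral

lemma nonneg_of_deriv {f f' : ℝ → ℝ} (hf : ∀ x, HasDerivAt f (f' x) x)
    (h0 : f 0 = 0) (hp : ∀ x, 0 < x → 0 ≤ f' x) {x : ℝ} (hx : 0 ≤ x) : 0 ≤ f x := by
  have hmono : MonotoneOn f (Ici 0) := by
    apply monotoneOn_of_deriv_nonneg (convex_Ici 0)
    · exact fun y _ => (hf y).continuousAt.continuousWithinAt
    · intro y hy
      exact (hf y).differentiableAt.differentiableWithinAt
    · intro y hy
      rw [interior_Ici] at hy
      rw [(hf y).deriv]
      exact hp y hy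
  have := hmono self_mem_Ici hx hx
  linarith [h0 ▸ this]

lemma aux_sin_ge {x : ℝ} (hx : 0 ≤ x) : x - x^3/6 ≤ Real.sin x := by
  have := nonneg_of_deriv (f := fun x => Real.sin x - x + x^3/6)
    (f' := fun x => Real.cos x - 1 + x^2/2) (fun y => ?_) (by norm_num) (fun y _ => ?_) hx
  · linarith [this]
  · have h1 := (Real.hasDerivAt_sin y).sub (hasDerivAt_id y)
    have h2 := (hasDerivAt_pow 3 y).div_const 6
    exact (h1.add h2).congr_deriv (by ring)
  · nlinarith [Real.one_sub_sq_div_two_le_cos (x := y)]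

lemma aux_cos_le {x : ℝ} (hx : 0 ≤ x) : Real.cos x ≤ 1 - x^2/2 + x^4/24 := by
  have := nonneg_of_deriv (f := fun x => 1 - x^2/2 + x^4/24 - Real.cos x)
    (f' := fun x => -x + x^3/6 + Real.sin x) (fun y => ?_) (by norm_num) (fun y hy => ?_) hx
  · linarith [this]
  · have h1 := ((hasDerivAt_pow 2 y).div_const 2)
    have h2 := (hasDerivAt_pow 4 y).div_const 24
    have h3 := Real.hasDerivAt_cos y
    exact (((hasDerivAt_const y (1:ℝ)).sub h1).add h2 |>.sub h3).congr_deriv (by ring)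
  · have := aux_sin_ge hy.le
    linarith

lemma aux_sin_le {x : ℝ} (hx : 0 ≤ x) : Real.sin x ≤ x - x^3/6 + x^5/120 := by
  have := nonneg_of_deriv (f := fun x => x - x^3/6 + x^5/120 - Real.sin x)
    (f' := fun x => 1 - x^2/2 + x^4/24 - Real.cos x) (fun y => ?_) (by norm_num) (fun y hy => ?_) hx
  · linarith [this]
  · have h1 := (hasDerivAt_pow 3 y).div_const 6
    have h2 := (hasDerivAt_pow 5 y).div_const 120
    have h3 := Real.hasDerivAt_sin y
    exact (((hasDerivAt_id y).sub h1).add h2 |>.sub h3).congr_deriv (by ring)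
  · have := aux_cos_le hy.le
    linarith

lemma hasDerivAt_mul_log2 {x : ℝ} (hx : x ≠ 0) :
    HasDerivAt (fun t : ℝ => t * Real.log (2*t) - t) (Real.log (2*x)) x := by
  have h2x : (2*x) ≠ 0 := by simp [hx]
  have hlog : HasDerivAt (fun t : ℝ => Real.log (2*t)) ((2*x)⁻¹ * 2) x :=
    (Real.hasDerivAt_log h2x).comp x (by simpa using (hasDerivAt_id x).const_mul 2)
  have := ((hasDerivAt_id x).mul hlog).sub (hasDerivAt_id x)
  exact this.congr_deriv (by simp only [id]; field_simp; ring)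

lemma continuous_G : Continuous (fun t : ℝ => t * Real.log (2*t) - t) := by
  have h : (fun t : ℝ => t * Real.log (2*t) - t)
      = fun t : ℝ => ((2*t) * Real.log (2*t))/2 - t := by
    funext t; ring
  rw [h]
  exact ((Real.continuous_mul_log.comp (continuous_const.mul continuous_id)).div_const 2).sub
    continuous_id

lemma intervalIntegrable_log2t {θ : ℝ} (hθ : 0 < θ) :
    IntervalIntegrable (fun t : ℝ => Real.log (2*t)) volume 0 θ := by
  have A : IntervalIntegrable (fun t : ℝ => -Real.log (2*t)) volume 0 (1/2) := by
    apply intervalIntegrable_deriv_of_nonneg (g := fun t : ℝ => -(t * Real.log (2*t) - t))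
    · exact continuous_G.neg.continuousOn
    · intro x hx
      simp only [min_eq_left, max_eq_right, (by norm_num : (0:ℝ) ≤ 1/2)] at hx
      exact (hasDerivAt_mul_log2 (ne_of_gt hx.1)).neg
    · intro x hx
      simp only [min_eq_left, max_eq_right, (by norm_num : (0:ℝ) ≤ 1/2)] at hx
      have : Real.log (2*x) < 0 := Real.log_neg (by linarith [hx.1]) (by linarith [hx.2])
      linarith
  have A' : IntervalIntegrable (fun t : ℝ => Real.log (2*t)) volume 0 (1/2) := by
    have := A.neg
    simp only [Pi.neg_def] at this
    convert this using 1
    funext t; simp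
  have B : IntervalIntegrable (fun t : ℝ => Real.log (2*t)) volume (1/2) θ := by
    apply ContinuousOn.intervalIntegrable
    apply (continuousOn_const.mul continuousOn_id).log
    intro x hx
    rcases Set.mem_uIcc.1 hx with h | h
    · have : (0:ℝ) < x := by linarith [h.1]
      show (2:ℝ) * x ≠ 0; positivity
    · have : (0:ℝ) < x := by linarith [h.1, hθ]
      show (2:ℝ) * x ≠ 0; positivity
  exact A'.trans B

lemma integral_log2t {θ : ℝ} (hθ : 0 < θ) :
    ∫ t in (0:ℝ)..θ, Real.log (2*t) = θ * Real.log (2*θ) - θ := by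
  have := integral_eq_sub_of_hasDerivAt_of_le hθ.le
    (f := fun t : ℝ => t * Real.log (2*t) - t)
    (f' := fun t : ℝ => Real.log (2*t))
    continuous_G.continuousOn
    (fun x hx => hasDerivAt_mul_log2 (ne_of_gt hx.1))
    (intervalIntegrable_log2t hθ)
  simpa using this

-- pointwise bounds on (0, π/3]
lemma pt_facts {t : ℝ} (h0 : 0 < t) (h3 : t ≤ π/3) :
    0 < t - t^3/6 ∧ t - t^3/6 ≤ Real.sin t ∧ Real.sin t ≤ t ∧ t ≤ 1.05 := by
  have hpi : π < 3.15 := by linarith [Real.pi_lt_d2]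
  have ht : t ≤ 1.05 := by linarith
  have ht2 : t^2 ≤ 1.1025 := by nlinarith
  refine ⟨by nlinarith [mul_le_mul_of_nonneg_left ht2 h0.le], aux_sin_ge h0.le,
    Real.sin_le h0.le, ht⟩

lemma log_split {t : ℝ} (h0 : 0 < t) (h3 : t ≤ π/3) :
    Real.log |2 * Real.sin t| = Real.log (2*t) + Real.log (Real.sin t / t) := by
  obtain ⟨hpos, hlo, hhi, ht⟩ := pt_facts h0 h3
  have hs : 0 < Real.sin t := by linarith
  rw [abs_of_pos (by linarith)]
  rw [show 2 * Real.sin t = (2*t) * (Real.sin t / t) by field_simp]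
  rw [Real.log_mul (by positivity) (by positivity)]

lemma pt_upper {t : ℝ} (h0 : 0 < t) (h3 : t ≤ π/3) :
    Real.log |2 * Real.sin t| ≤ Real.log (2*t) - t^2/6 + t^4/120 := by
  obtain ⟨hpos, hlo, hhi, ht⟩ := pt_facts h0 h3
  have hs : 0 < Real.sin t := by linarith
  rw [log_split h0 h3]
  have h1 : Real.log (Real.sin t / t) ≤ Real.sin t / t - 1 :=
    Real.log_le_sub_one_of_pos (by positivity)
  have h2 : Real.sin t / t ≤ 1 - t^2/6 + t^4/120 := by
    rw [div_le_iff₀ h0]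
    nlinarith [aux_sin_le h0.le]
  linarith

lemma pt_lower {t : ℝ} (h0 : 0 < t) (h3 : t ≤ π/3) :
    Real.log (2*t) - t^2/6 - t^4/29 ≤ Real.log |2 * Real.sin t| := by
  obtain ⟨hpos, hlo, hhi, ht⟩ := pt_facts h0 h3
  have hs : 0 < Real.sin t := by linarith
  rw [log_split h0 h3]
  have h1 : Real.log (t / Real.sin t) ≤ t / Real.sin t - 1 :=
    Real.log_le_sub_one_of_pos (by positivity)
  have h2 : Real.log (t / Real.sin t) = - Real.log (Real.sin t / t) := by
    rw [← Real.log_inv, inv_div]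
  have ht2 : t^2 ≤ 1.1025 := by nlinarith [Real.pi_lt_d2]
  have hA : (0:ℝ) ≤ 1 + t^2/6 + t^4/29 := by positivity
  have h5 : 0 ≤ t^5 * (7/6 - t^2) :=
    mul_nonneg (pow_nonneg h0.le 5) (by nlinarith)
  have hkey : t ≤ (1 + t^2/6 + t^4/29) * (t - t^3/6) := by nlinarith [h5]
  have h3' : t / Real.sin t ≤ 1 + t^2/6 + t^4/29 := by
    rw [div_le_iff₀ hs]
    calc t ≤ (1 + t^2/6 + t^4/29) * (t - t^3/6) := hkey
    _ ≤ (1 + t^2/6 + t^4/29) * Real.sin t := by nlinarith [mul_le_mul_of_nonneg_left hlo hA]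
  nlinarith [h1, h2, h3']

lemma intervalIntegrable_logsin {θ : ℝ} (h0 : 0 < θ) (h3 : θ ≤ π/3) :
    IntervalIntegrable (fun t : ℝ => Real.log |2 * Real.sin t|) volume 0 θ := by
  rw [intervalIntegrable_iff_integrableOn_Ioc_of_le h0.le]
  have hg : IntegrableOn (fun t : ℝ => |Real.log (2*t)| + (t^2/6 + t^4/29)) (Ioc 0 θ) volume := by
    have h1 : IntervalIntegrable (fun t : ℝ => |Real.log (2*t)| + (t^2/6 + t^4/29)) volume 0 θ :=
      (intervalIntegrable_log2t h0).abs.add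
        ((continuous_pow 2 |>.div_const 6 |>.add (continuous_pow 4 |>.div_const 29)).intervalIntegrable 0 θ)
    rwa [intervalIntegrable_iff_integrableOn_Ioc_of_le h0.le] at h1
  apply Integrable.mono' hg
  · exact ((Real.measurable_log.comp
      ((continuous_abs.comp (continuous_const.mul Real.continuous_sin)).measurable)).aestronglyMeasurable)
  · rw [ae_restrict_iff' measurableSet_Ioc]
    filter_upwards with t ht
    have h0t : 0 < t := ht.1
    have h3t : t ≤ π/3 := le_trans ht.2 h3
    have hu := pt_upper h0t h3t
    have hl := pt_lower h0t h3t
    have habs : Real.log (2*t) ≤ |Real.log (2*t)| := le_abs_self _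
    have habs' : -|Real.log (2*t)| ≤ Real.log (2*t) := neg_abs_le _
    rw [Real.norm_eq_abs, abs_le]
    constructor
    · nlinarith [sq_nonneg t, pow_nonneg h0t.le 4]
    · nlinarith [sq_nonneg t, pow_nonneg h0t.le 4]

lemma integral_poly {θ : ℝ} (c : ℝ) :
    ∫ t in (0:ℝ)..θ, (t^2/6 + t^4/c) = θ^3/18 + θ^5/(5*c) := by
  rw [intervalIntegral.integral_add
    ((continuous_pow 2 |>.div_const 6).intervalIntegrable 0 θ)
    ((continuous_pow 4 |>.div_const c).intervalIntegrable 0 θ)]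
  simp [intervalIntegral.integral_div, integral_pow]
  ring

lemma lob_le {θ : ℝ} (h0 : 0 < θ) (h3 : θ ≤ π/3) :
    lob θ ≤ θ - θ * Real.log (2*θ) + θ^3/18 + θ^5/145 := by
  have hmono : ∫ t in (0:ℝ)..θ, (Real.log (2*t) - (t^2/6 + t^4/29))
      ≤ ∫ t in (0:ℝ)..θ, Real.log |2 * Real.sin t| := by
    apply intervalIntegral.integral_mono_on h0.le
      ((intervalIntegrable_log2t h0).sub
        ((show Continuous (fun t : ℝ => t^2/6 + t^4/29) from continuous_pow 2 |>.div_const 6 |>.add (continuous_pow 4 |>.div_const 29)).intervalIntegrable 0 θ))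
      (intervalIntegrable_logsin h0 h3)
    intro t ht
    rcases eq_or_lt_of_le ht.1 with h | h
    · simp [← h]
    · have := pt_lower h (le_trans ht.2 h3); linarith
  have hval : ∫ t in (0:ℝ)..θ, (Real.log (2*t) - (t^2/6 + t^4/29))
      = θ * Real.log (2*θ) - θ - (θ^3/18 + θ^5/145) := by
    rw [intervalIntegral.integral_sub (intervalIntegrable_log2t h0)
      ((show Continuous (fun t : ℝ => t^2/6 + t^4/29) from continuous_pow 2 |>.div_const 6 |>.add (continuous_pow 4 |>.div_const 29)).intervalIntegrable 0 θ)]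
    rw [integral_log2t h0, integral_poly]
    norm_num
  rw [lob]
  rw [hval] at hmono
  linarith

lemma le_lob {θ : ℝ} (h0 : 0 < θ) (h3 : θ ≤ π/3) :
    θ - θ * Real.log (2*θ) + θ^3/18 - θ^5/600 ≤ lob θ := by
  have hmono : ∫ t in (0:ℝ)..θ, Real.log |2 * Real.sin t|
      ≤ ∫ t in (0:ℝ)..θ, (Real.log (2*t) - (t^2/6 - t^4/120)) := by
    apply intervalIntegral.integral_mono_on h0.le
      (intervalIntegrable_logsin h0 h3)
      ((intervalIntegrable_log2t h0).sub
        ((show Continuous (fun t : ℝ => t^2/6 - t^4/120) from continuous_pow 2 |>.div_const 6 |>.sub (continuous_pow 4 |>.div_const 120)).intervalIntegrable 0 θ))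
    intro t ht
    rcases eq_or_lt_of_le ht.1 with h | h
    · simp [← h]
    · have := pt_upper h (le_trans ht.2 h3); linarith
  have hval : ∫ t in (0:ℝ)..θ, (Real.log (2*t) - (t^2/6 - t^4/120))
      = θ * Real.log (2*θ) - θ - (θ^3/18 - θ^5/600) := by
    rw [intervalIntegral.integral_sub (intervalIntegrable_log2t h0)
      ((show Continuous (fun t : ℝ => t^2/6 - t^4/120) from continuous_pow 2 |>.div_const 6 |>.sub (continuous_pow 4 |>.div_const 120)).intervalIntegrable 0 θ)]
    rw [integral_log2t h0]
    rw [intervalIntegral.integral_sub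
      ((continuous_pow 2 |>.div_const 6).intervalIntegrable 0 θ)
      ((continuous_pow 4 |>.div_const 120).intervalIntegrable 0 θ)]
    simp [intervalIntegral.integral_div, integral_pow]
    ring
  rw [lob]
  rw [hval] at hmono
  linarith

lemma log3_lo : (1.0974:ℝ) < Real.log 3 := by
  have h : ((2:ℝ)^19) < 3^12 := by norm_num
  have h2 := Real.log_lt_log (by positivity) h
  rw [Real.log_pow, Real.log_pow] at h2
  push_cast at h2
  nlinarith [Real.log_two_gt_d9]

lemma log3_hi : Real.log 3 < 1.1091 := by
  have h : ((3:ℝ)^5) < 2^8 := by norm_num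
  have h2 := Real.log_lt_log (by positivity) h
  rw [Real.log_pow, Real.log_pow] at h2
  push_cast at h2
  nlinarith [Real.log_two_lt_d9]

lemma log5_lo : (1.6090:ℝ) < Real.log 5 := by
  have h : ((2:ℝ)^65) < 5^28 := by norm_num
  have h2 := Real.log_lt_log (by positivity) h
  rw [Real.log_pow, Real.log_pow] at h2
  push_cast at h2
  nlinarith [Real.log_two_gt_d9]

lemma log5_hi : Real.log 5 < 1.6096 := by
  have h : ((5:ℝ)^59) < 2^137 := by norm_num
  have h2 := Real.log_lt_log (by positivity) h
  rw [Real.log_pow, Real.log_pow] at h2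
  push_cast at h2
  nlinarith [Real.log_two_lt_d9]

lemma logpi3_lo : (0.045:ℝ) < Real.log (π/3) := by
  have hπ := Real.pi_gt_d6
  have hpos : (0:ℝ) < 3/π := by positivity
  have h1 := Real.log_le_sub_one_of_pos hpos
  have h2 : Real.log (3/π) = - Real.log (π/3) := by
    rw [← Real.log_inv, inv_div]
  have h3 : 3/π < 0.955 := by
    rw [div_lt_iff₀ (by positivity)]
    nlinarith
  linarith

lemma logpi3_hi : Real.log (π/3) < 0.0472 := by
  have hπ := Real.pi_lt_d6
  have h1 := Real.log_le_sub_one_of_pos (show (0:ℝ) < π/3 by positivity)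
  have : π/3 - 1 < 0.0472 := by linarith
  linarith

lemma pi_pows : π^3 < 3.141593^3 ∧ (3.141592:ℝ)^3 < π^3
    ∧ π^5 < 3.141593^5 ∧ (3.141592:ℝ)^5 < π^5 := by
  have h1 := Real.pi_gt_d6
  have h2 := Real.pi_lt_d6
  refine ⟨pow_lt_pow_left₀ h2 Real.pi_pos.le (by norm_num), pow_lt_pow_left₀ h1 (by norm_num) (by norm_num),
    pow_lt_pow_left₀ h2 Real.pi_pos.le (by norm_num), pow_lt_pow_left₀ h1 (by norm_num) (by norm_num)⟩

lemma lob_pi6_lt : lob (π/6) < 0.52 := by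
  have h := lob_le (θ := π/6) (by positivity) (by linarith [Real.pi_pos])
  rw [show 2*(π/6) = π/3 by ring] at h
  obtain ⟨hp3, -, hp5, -⟩ := pi_pows
  have hπ1 := Real.pi_gt_d6
  have hπ2 := Real.pi_lt_d6
  have hx := logpi3_lo
  nlinarith [h, mul_pos (sub_pos.2 hπ1) (sub_pos.2 hx), logpi3_hi]

lemma lob_pi10_lt : lob (π/10) < 0.47 := by
  have h := lob_le (θ := π/10) (by positivity) (by linarith [Real.pi_pos])
  have hlog : Real.log (2*(π/10)) = Real.log (π/3) + (Real.log 3 - Real.log 5) := by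
    rw [show 2*(π/10) = (π/3) * (3/5) by ring,
      Real.log_mul (ne_of_gt (by positivity)) (by norm_num),
      Real.log_div (show (3:ℝ) ≠ 0 by norm_num) (show (5:ℝ) ≠ 0 by norm_num)]
  rw [hlog] at h
  obtain ⟨hp3, -, hp5, -⟩ := pi_pows
  have hπ1 := Real.pi_gt_d6
  have hπ2 := Real.pi_lt_d6
  have hinlo : (-0.4672:ℝ) < Real.log (π/3) + (Real.log 3 - Real.log 5) := by
    linarith [logpi3_lo, log3_lo, log5_hi]
  have hinhi : Real.log (π/3) + (Real.log 3 - Real.log 5) < -0.4527 := by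
    linarith [logpi3_hi, log3_hi, log5_lo]
  nlinarith [h, mul_pos (sub_pos.2 hπ2) (sub_pos.2 hinlo)]

lemma lob_pi9_gt : (0.46:ℝ) < lob (π/9) := by
  have h := le_lob (θ := π/9) (by positivity) (by linarith [Real.pi_pos])
  have hlog : Real.log (2*(π/9)) = Real.log (π/3) + (Real.log 2 - Real.log 3) := by
    rw [show 2*(π/9) = (π/3) * (2/3) by ring,
      Real.log_mul (ne_of_gt (by positivity)) (by norm_num),
      Real.log_div (show (2:ℝ) ≠ 0 by norm_num) (show (3:ℝ) ≠ 0 by norm_num)]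
  rw [hlog] at h
  obtain ⟨-, hp3, -, hp5⟩ := pi_pows
  obtain ⟨hp3', -, hp5', -⟩ := pi_pows
  have hπ1 := Real.pi_gt_d6
  have hπ2 := Real.pi_lt_d6
  have hinlo : (-0.3710:ℝ) < Real.log (π/3) + (Real.log 2 - Real.log 3) := by
    linarith [logpi3_lo, Real.log_two_gt_d9, log3_hi]
  have hinhi : Real.log (π/3) + (Real.log 2 - Real.log 3) < -0.3570 := by
    linarith [logpi3_hi, Real.log_two_lt_d9, log3_lo]
  nlinarith [h, mul_pos (sub_pos.2 hπ1) (neg_pos.2 (show Real.log (π/3) + (Real.log 2 - Real.log 3) + 0.3570 < 0 by linarith))]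

lemma lob_pi3_gt : (0.33:ℝ) < lob (π/3) := by
  have h := le_lob (θ := π/3) (by positivity) le_rfl
  have hlog : Real.log (2*(π/3)) = Real.log (π/3) + Real.log 2 := by
    rw [show 2*(π/3) = (π/3) * 2 by ring, Real.log_mul (ne_of_gt (by positivity)) (by norm_num)]
  rw [hlog] at h
  obtain ⟨-, hp3, -, hp5⟩ := pi_pows
  obtain ⟨hp3', -, hp5', -⟩ := pi_pows
  have hπ1 := Real.pi_gt_d6
  have hπ2 := Real.pi_lt_d6
  have hinlo : (0.7381:ℝ) < Real.log (π/3) + Real.log 2 := by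
    linarith [logpi3_lo, Real.log_two_gt_d9]
  have hinhi : Real.log (π/3) + Real.log 2 < 0.7404 := by
    linarith [logpi3_hi, Real.log_two_lt_d9]
  nlinarith [h, mul_pos (sub_pos.2 hπ2) (sub_pos.2 hinlo)]


/-- `12Λ(π/6) + 60Λ(π/10) − 54Λ(π/9) < 30Λ(π/3)`: the constant appearing in
Adams's bound when `g₅ ≥ 1` is strictly less than `14·v_tet` (after subtracting
`4·v_tet` from both sides). -/
theorem adams_constant_lt :
    12 * lob (Real.pi / 6) + 60 * lob (Real.pi / 10) - 54 * lob (Real.pi / 9)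
      < 30 * lob (Real.pi / 3) := by
  have h1 := lob_pi6_lt
  have h2 := lob_pi10_lt
  have h3 := lob_pi9_gt
  have h4 := lob_pi3_gt
  nlinarith [h1, h2, h3, h4]
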